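/- arXiv:1705.04188 — 3 statements merged into one kernel-verified Lean document; each statement's English description precedes it below -/
import Mathlib

section
/- Let A_0, …, A_s ∈ M_m(K[t]), b ∈ K[t]^m and ν ∈ ℕ, and assume the system (REC') is t-tail regular, i.e. λ(x) := det(Σ_{j=0}^s A_{j0} x^j) is not the zero polynomial. Let y ∈ K(t)^m be a solution of A_s·σ^s(y) + … + A_0·y = t^{−ν}·b, let d ∈ K[t] be a common denominator of y in lowest terms (the monic least common multiple of the denominators of the entries of y), and write d = g·t^n with g ∈ K[t], t ∤ g. Then n = 0, or n ≤ ν, or λ(q^{−n}) = 0. -/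
open Polynomial

private lemma aux_sigma_pow {K : Type*} [Field K] (q : K) (σ : RatFunc K ≃ₐ[K] RatFunc K)
    (hσ : σ RatFunc.X = RatFunc.C q * RatFunc.X) (j : ℕ) (p : K[X]) :
    (σ ^ j) (algebraMap K[X] (RatFunc K) p)
      = algebraMap K[X] (RatFunc K) (aeval (C (q ^ j) * X) p) := by
  have hX : (σ ^ j) RatFunc.X = RatFunc.C (q ^ j) * RatFunc.X := by
    induction j with
    | zero => simp
    | succ j ih =>
      rw [pow_succ, AlgEquiv.mul_apply, hσ, map_mul, ih]
      have hC : (σ ^ j) (RatFunc.C q) = RatFunc.C q := (σ ^ j).commutes q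
      rw [hC, pow_succ, map_mul]
      ring
  have key : (AlgEquiv.toAlgHom (σ ^ j)).comp (IsScalarTower.toAlgHom K K[X] (RatFunc K))
      = (IsScalarTower.toAlgHom K K[X] (RatFunc K)).comp (aeval (C (q ^ j) * X)) := by
    apply Polynomial.algHom_ext
    simp [hX, RatFunc.algebraMap_X, RatFunc.algebraMap_C]
    simpa using hX
  exact DFunLike.congr_fun key p

private lemma aux_aeval_inj {K : Type*} [Field K] (a : K) (ha : a ≠ 0) :
    Function.Injective (aeval (C a * X) : K[X] →ₐ[K] K[X]) := by
  intro p p' h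
  have key : ((aeval (C a⁻¹ * X) : K[X] →ₐ[K] K[X]).comp (aeval (C a * X) : K[X] →ₐ[K] K[X]))
      = AlgHom.id K K[X] := by
    apply Polynomial.algHom_ext
    simp only [AlgHom.comp_apply, aeval_X, map_mul, aeval_C, AlgHom.id_apply]
    rw [Polynomial.algebraMap_eq, ← mul_assoc, ← C_mul, mul_inv_cancel₀ ha, C_1, one_mul]
  have h1 := DFunLike.congr_fun key p
  have h2 := DFunLike.congr_fun key p'
  simp only [AlgHom.comp_apply, AlgHom.id_apply] at h1 h2
  rw [← h1, ← h2, h]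

/-- **Denominator bound for the power of `t`** (Theorem `thm:deg.bound`).
`K` is a field of characteristic zero, `q ≠ 0` is not a root of unity, and `σ` is the
`K`-algebra automorphism of `K(t)` with `σ(t) = q·t`.  If the system
`A_s σ^s(y) + ⋯ + A_0 y = t^{-ν} b` is `t`-tail regular (`λ ≠ 0`), `y` is a rational
solution, `d` is the monic least common multiple of the denominators of the entries of
`y`, and `d = g·tⁿ` with `t ∤ g`, then `n = 0`, or `n ≤ ν`, or `λ(q^{-n}) = 0`. -/
theorem t_power_denominator_bound
    (K : Type*) [Field K] [CharZero K] [DecidableEq K]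
    (q : K) (hq0 : q ≠ 0) (hqru : ∀ k : ℕ, 0 < k → q ^ k ≠ 1)
    (σ : RatFunc K ≃ₐ[K] RatFunc K) (hσ : σ RatFunc.X = RatFunc.C q * RatFunc.X)
    (m s ν : ℕ)
    (A : ℕ → Matrix (Fin m) (Fin m) K[X]) (b : Fin m → K[X])
    (lam : K[X])
    (hlam : lam = Matrix.det (∑ j ∈ Finset.range (s + 1),
      (X : K[X]) ^ j • ((A j).map fun p => Polynomial.C (p.eval 0))))
    (hreg : lam ≠ 0)
    (y : Fin m → RatFunc K)
    (hsol : ∑ j ∈ Finset.range (s + 1),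
        ((A j).map (algebraMap K[X] (RatFunc K))).mulVec (fun i => (σ ^ j) (y i))
      = fun i => algebraMap K[X] (RatFunc K) (b i) / RatFunc.X ^ ν)
    (d g : K[X]) (n : ℕ)
    (hd : d = Finset.univ.lcm fun i => (y i).denom)
    (hdgn : d = g * X ^ n)
    (htg : ¬ (X : K[X]) ∣ g) :
    n = 0 ∨ n ≤ ν ∨ lam.eval ((q ^ n)⁻¹) = 0 := by
  by_cases hn0 : n = 0
  · exact Or.inl hn0
  by_cases hnν : n ≤ ν
  · exact Or.inr (Or.inl hnν)
  refine Or.inr (Or.inr ?_)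
  push_neg at hnν
  have hn : 0 < n := Nat.pos_of_ne_zero hn0
  set aM : K[X] →+* RatFunc K := (algebraMap K[X] (RatFunc K)) with haM
  have haMinj : Function.Injective aM := RatFunc.algebraMap_injective K
  -- basic facts about d
  have hdvd : ∀ i, (y i).denom ∣ d := fun i => hd ▸ Finset.dvd_lcm (Finset.mem_univ i)
  have hdne : d ≠ 0 := by
    rw [hd]
    intro h
    rcases Finset.lcm_eq_zero_iff.mp h with ⟨i, _, hi⟩
    exact RatFunc.denom_ne_zero (y i) hi
  -- numerators over common denominator d
  set z : Fin m → K[X] := fun i => (y i).num * (d / (y i).denom) with hz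
  have hyz : ∀ i, y i = aM (z i) / aM d := by
    intro i
    have h1 : (y i).denom * (d / (y i).denom) = d :=
      EuclideanDomain.mul_div_cancel' (RatFunc.denom_ne_zero (y i)) (hdvd i)
    have h2 : d / (y i).denom ≠ 0 := by
      intro h
      rw [h, mul_zero] at h1
      exact hdne h1.symm
    have h2' : aM (d / (y i).denom) ≠ 0 := fun h => h2 (haMinj (by simpa using h))
    have h3 : aM d = aM (y i).denom * aM (d / (y i).denom) := by rw [← map_mul, h1]
    conv_lhs => rw [← RatFunc.num_div_denom (y i)]
    rw [show z i = (y i).num * (d / (y i).denom) from rfl, map_mul, h3,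
      mul_div_mul_right _ _ h2']
  -- the twisted substitution maps
  set τ : ℕ → (K[X] →ₐ[K] K[X]) := fun j => aeval (C (q ^ j) * X) with hτ
  have hσy : ∀ (j : ℕ) (i : Fin m), (σ ^ j) (y i) = aM (τ j (z i)) / aM (τ j d) := by
    intro j i
    rw [hyz i, map_div₀, haM, aux_sigma_pow q σ hσ j, aux_sigma_pow q σ hσ j]
  have hτinj : ∀ j : ℕ, Function.Injective (τ j) := fun j =>
    aux_aeval_inj (q ^ j) (pow_ne_zero j hq0)
  have hτne : ∀ (j : ℕ) (p : K[X]), p ≠ 0 → τ j p ≠ 0 := by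
    intro j p hp h
    exact hp (hτinj j (by simpa using h))
  have hτeval : ∀ (j : ℕ) (p : K[X]), (τ j p).eval 0 = p.eval 0 := by
    intro j p
    rw [hτ]
    simp only
    rw [← comp_eq_aeval, eval_comp]
    simp
  -- componentwise form of the solution equation
  have hcomp : ∀ i : Fin m, ∑ j ∈ Finset.range (s+1),
      ∑ k, aM (A j i k) * ((σ ^ j) (y k)) = aM (b i) / RatFunc.X ^ ν := by
    intro i
    have h := congrFun hsol i
    simpa [Matrix.mulVec, dotProduct, Matrix.map_apply, Finset.sum_apply] using h
  -- clear denominators: a polynomial identity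
  have hXRne : (RatFunc.X : RatFunc K) ^ ν ≠ 0 := pow_ne_zero _ RatFunc.X_ne_zero
  have hτdne : ∀ j : ℕ, aM (τ j d) ≠ 0 := by
    intro j h
    exact hτne j d hdne (haMinj (by simpa using h))
  have hpoly : ∀ i : Fin m,
      ∑ j ∈ Finset.range (s+1), (∑ k, A j i k * τ j (z k)) *
        (X ^ ν * ∏ j' ∈ (Finset.range (s+1)).erase j, τ j' d)
      = b i * ∏ j' ∈ Finset.range (s+1), τ j' d := by
    intro i
    apply haMinj
    have hterm : ∀ j ∈ Finset.range (s+1),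
        (∑ k, aM (A j i k) * ((σ ^ j) (y k))) *
          (RatFunc.X ^ ν * ∏ j' ∈ Finset.range (s+1), aM (τ j' d))
        = aM ((∑ k, A j i k * τ j (z k)) *
            (X ^ ν * ∏ j' ∈ (Finset.range (s+1)).erase j, τ j' d)) := by
      intro j hj
      rw [← Finset.mul_prod_erase _ _ hj]
      simp only [hσy, map_mul, map_sum, map_pow, map_prod, haM, RatFunc.algebraMap_X]
      rw [Finset.sum_mul, Finset.sum_mul]
      refine Finset.sum_congr rfl fun k _ => ?_
      have hv : algebraMap K[X] (RatFunc K) ((τ j) d) ≠ 0 := hτdne j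
      field_simp
    have hR : (aM (b i) / RatFunc.X ^ ν) * (RatFunc.X ^ ν * ∏ j ∈ Finset.range (s+1), aM (τ j d))
        = aM (b i * ∏ j' ∈ Finset.range (s+1), τ j' d) := by
      rw [map_mul, map_prod]
      field_simp
    have hL : aM (∑ j ∈ Finset.range (s+1), (∑ k, A j i k * τ j (z k)) *
          (X ^ ν * ∏ j' ∈ (Finset.range (s+1)).erase j, τ j' d))
        = (aM (b i) / RatFunc.X ^ ν) * (RatFunc.X ^ ν * ∏ j ∈ Finset.range (s+1), aM (τ j d)) := by
      rw [map_sum, ← hcomp i, Finset.sum_mul]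
      exact Finset.sum_congr rfl fun j hj => (hterm j hj).symm
    rw [hL, hR]
  -- substitute d = g * X^n and cancel powers of X
  set e : ℕ → K[X] := fun j => τ j g * C (q ^ (j*n)) with he
  have hτd : ∀ j : ℕ, τ j d = e j * X ^ n := by
    intro j
    have hX : τ j X = C (q ^ j) * X := aeval_X _
    rw [hdgn, map_mul, map_pow, hX, he]
    simp only
    rw [mul_pow, ← C_pow, ← pow_mul]
    ring
  have hcard : ∀ j ∈ Finset.range (s+1), ((Finset.range (s+1)).erase j).card = s := by
    intro j hj
    rw [Finset.card_erase_of_mem hj, Finset.card_range]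
    omega
  have hprod_erase : ∀ j ∈ Finset.range (s+1),
      ∏ j' ∈ (Finset.range (s+1)).erase j, τ j' d
        = (∏ j' ∈ (Finset.range (s+1)).erase j, e j') * X ^ (n * s) := by
    intro j hj
    simp only [hτd]
    rw [Finset.prod_mul_distrib, Finset.prod_const, hcard j hj, ← pow_mul, mul_comm n s]
  have hprod_full : ∏ j' ∈ Finset.range (s+1), τ j' d
      = (∏ j' ∈ Finset.range (s+1), e j') * X ^ (n * (s+1)) := by
    simp only [hτd]
    rw [Finset.prod_mul_distrib, Finset.prod_const, Finset.card_range, ← pow_mul, mul_comm n (s+1)]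
  have hLp : ∀ i : Fin m,
      ∑ j ∈ Finset.range (s+1), (∑ k, A j i k * τ j (z k)) *
          ∏ j' ∈ (Finset.range (s+1)).erase j, e j'
      = X ^ (n - ν) * (b i * ∏ j' ∈ Finset.range (s+1), e j') := by
    intro i
    apply mul_left_cancel₀ (pow_ne_zero (ν + n * s) (Polynomial.X_ne_zero (R := K)))
    calc (X : K[X]) ^ (ν + n * s) * (∑ j ∈ Finset.range (s+1), (∑ k, A j i k * τ j (z k)) *
          ∏ j' ∈ (Finset.range (s+1)).erase j, e j')
        = ∑ j ∈ Finset.range (s+1), (∑ k, A j i k * τ j (z k)) *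
            (X ^ ν * ((∏ j' ∈ (Finset.range (s+1)).erase j, e j') * X ^ (n * s))) := by
          rw [Finset.mul_sum]
          exact Finset.sum_congr rfl fun j _ => by rw [pow_add]; ring
      _ = ∑ j ∈ Finset.range (s+1), (∑ k, A j i k * τ j (z k)) *
            (X ^ ν * ∏ j' ∈ (Finset.range (s+1)).erase j, τ j' d) :=
          Finset.sum_congr rfl fun j hj => by rw [hprod_erase j hj]
      _ = b i * ∏ j' ∈ Finset.range (s+1), τ j' d := hpoly i
      _ = b i * ((∏ j' ∈ Finset.range (s+1), e j') * X ^ (n * (s+1))) := by rw [hprod_full]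
      _ = X ^ (ν + n * s) * (X ^ (n - ν) * (b i * ∏ j' ∈ Finset.range (s+1), e j')) := by
          rw [show n * (s+1) = (ν + n * s) + (n - ν) by rw [Nat.mul_succ]; omega, pow_add]
          ring
  -- evaluate at 0
  have heval : ∀ i : Fin m,
      ∑ j ∈ Finset.range (s+1), (∑ k, (A j i k).eval 0 * (z k).eval 0) *
          ∏ j' ∈ (Finset.range (s+1)).erase j, (e j').eval 0 = 0 := by
    intro i
    have h := congrArg (eval 0) (hLp i)
    simp only [eval_mul, eval_finset_sum, eval_prod, eval_pow, eval_X, hτeval] at h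
    rw [zero_pow (by omega : n - ν ≠ 0), zero_mul] at h
    exact h
  -- evaluate the constant terms
  have hg0 : g.eval 0 ≠ 0 := by
    intro h
    exact htg (X_dvd_iff.mpr (by rwa [coeff_zero_eq_eval_zero]))
  set u : K := (q ^ n)⁻¹ with hu
  set Qf : K := ∏ j' ∈ Finset.range (s+1), q ^ (j' * n) with hQf
  have hQfne : Qf ≠ 0 := Finset.prod_ne_zero_iff.mpr fun j _ => pow_ne_zero _ hq0
  have hEj : ∀ j ∈ Finset.range (s+1),
      ∏ j' ∈ (Finset.range (s+1)).erase j, (e j').eval 0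
        = g.eval 0 ^ s * (u ^ j * Qf) := by
    intro j hj
    have h1 : ∀ j' : ℕ, (e j').eval 0 = g.eval 0 * q ^ (j' * n) := by
      intro j'
      rw [he]
      simp only
      rw [eval_mul, eval_C, hτeval]
    simp only [h1]
    rw [Finset.prod_mul_distrib, Finset.prod_const, hcard j hj]
    congr 1
    have h2 : q ^ (j * n) * ∏ j' ∈ (Finset.range (s+1)).erase j, q ^ (j' * n) = Qf := by
      rw [hQf]
      exact Finset.mul_prod_erase _ (fun j' => q ^ (j' * n)) hj
    have h3 : u ^ j = (q ^ (j * n))⁻¹ := by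
      rw [hu, ← inv_pow, ← pow_mul, mul_comm n j, inv_pow]
    rw [h3, ← h2, inv_mul_cancel_left₀ (pow_ne_zero _ hq0)]
  set c : Fin m → K := fun k => (z k).eval 0 with hc
  have key : ∀ i : Fin m, ∑ j ∈ Finset.range (s+1),
      u ^ j * ∑ k, (A j i k).eval 0 * c k = 0 := by
    intro i
    have h2 : ∑ j ∈ Finset.range (s+1), (∑ k, (A j i k).eval 0 * c k) *
        (g.eval 0 ^ s * (u ^ j * Qf)) = 0 :=
      ((Finset.sum_congr rfl fun j hj => by rw [hEj j hj]).symm).trans (heval i)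
    have h3 : (g.eval 0 ^ s * Qf) * (∑ j ∈ Finset.range (s+1),
        u ^ j * ∑ k, (A j i k).eval 0 * c k) = 0 := by
      rw [Finset.mul_sum]
      exact (Finset.sum_congr rfl fun j _ => by ring).trans h2
    exact (mul_eq_zero.mp h3).resolve_left (mul_ne_zero (pow_ne_zero _ hg0) hQfne)
  -- the vector of constant terms is nonzero
  have hXne0 : aM X ≠ 0 := by
    intro h
    exact Polynomial.X_ne_zero (R := K) (haMinj (by simpa using h))
  have hcne : c ≠ 0 := by
    intro hc0
    set d' : K[X] := g * X ^ (n-1) with hd'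
    have hdd' : d = X * d' := by
      have hpow : (X : K[X]) ^ n = X ^ (n-1) * X := by
        rw [← pow_succ, Nat.sub_add_cancel hn]
      rw [hdgn, hd', hpow]
      ring
    have hd'ne : d' ≠ 0 := by
      intro h
      rw [hdd', h, mul_zero] at hdne
      exact hdne rfl
    have hdvd' : ∀ i : Fin m, (y i).denom ∣ d' := by
      intro i
      rw [RatFunc.denom_dvd hd'ne]
      have hXz : (X : K[X]) ∣ z i := by
        rw [X_dvd_iff, coeff_zero_eq_eval_zero]
        exact congrFun hc0 i
      obtain ⟨w, hw⟩ := hXz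
      refine ⟨w, ?_⟩
      rw [hyz i, hw, hdd', map_mul, map_mul, mul_div_mul_left _ _ hXne0]
    have hdd : d ∣ d' := hd ▸ Finset.lcm_dvd fun i _ => hdvd' i
    have h1 : d.natDegree ≤ d'.natDegree := natDegree_le_of_dvd hdd hd'ne
    have h2 : d.natDegree = 1 + d'.natDegree := by
      rw [hdd', natDegree_mul (Polynomial.X_ne_zero (R := K)) hd'ne, natDegree_X]
    omega
  -- the matrix of constant terms is singular
  set M : Matrix (Fin m) (Fin m) K :=
    ∑ j ∈ Finset.range (s+1), u ^ j • (A j).map (fun p => p.eval 0) with hM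
  have hMc : M.mulVec c = 0 := by
    funext i
    have h4 : (M.mulVec c) i = ∑ j ∈ Finset.range (s+1),
        u ^ j * ∑ k, (A j i k).eval 0 * c k := by
      simp only [Matrix.mulVec, dotProduct, hM, Matrix.sum_apply, Matrix.smul_apply,
        Matrix.map_apply, smul_eq_mul, Finset.sum_mul]
      rw [Finset.sum_comm]
      exact Finset.sum_congr rfl fun j _ => by
        rw [Finset.mul_sum]
        exact Finset.sum_congr rfl fun k _ => by ring
    rw [Pi.zero_apply, h4]
    exact key i
  have hdet : M.det = 0 := Matrix.exists_mulVec_eq_zero_iff.mp ⟨c, hcne, hMc⟩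
  rw [hlam]
  have hmap : (Polynomial.evalRingHom u).mapMatrix (∑ j ∈ Finset.range (s + 1),
      (X : K[X]) ^ j • ((A j).map fun p => Polynomial.C (p.eval 0))) = M := by
    ext i k
    simp [hM, Matrix.sum_apply, Matrix.smul_apply, Matrix.map_apply, smul_eq_mul, eval_finset_sum]
    exact Finset.sum_congr rfl fun j _ => mul_comm _ _
  calc eval u (∑ j ∈ Finset.range (s + 1),
      (X : K[X]) ^ j • ((A j).map fun p => Polynomial.C (p.eval 0))).det
      = ((Polynomial.evalRingHom u).mapMatrix (∑ j ∈ Finset.range (s + 1),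
        (X : K[X]) ^ j • ((A j).map fun p => Polynomial.C (p.eval 0)))).det := by
        rw [← Polynomial.coe_evalRingHom, RingHom.map_det]
    _ = M.det := by rw [hmap]
    _ = 0 := hdet
end

section
/- Let A_0, …, A_s ∈ M_m(K[t]), b ∈ K[t]^m, ν ∈ ℕ, and assume the system (REC') is t-head regular, i.e. with ℓ := max_j deg_t A_j and A_{jℓ} the coefficient matrix of t^ℓ in A_j, the polynomial ρ(x) := det(Σ_{j=0}^s A_{jℓ} x^j) is not the zero polynomial. If y ∈ K[t]^m is a nonzero polynomial solution of A_s·σ^s(y) + … + A_0·y = t^{−ν}·b of degree n (the maximum of the degrees of the entries of y), then either b ≠ 0 and ℓ + n + ν ≤ deg b, or ρ(q^n) = 0. -/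
open Polynomial

lemma coeff_comp_C_mul_X {R : Type*} [CommRing R] (p : R[X]) (c : R) (k : ℕ) :
    (p.comp (C c * X)).coeff k = c ^ k * p.coeff k := by
  induction p using Polynomial.induction_on' with
  | add p r hp hr => simp [add_comp, hp, hr, mul_add]
  | monomial e a =>
    rw [monomial_comp, mul_pow, ← C_pow, mul_left_comm, coeff_C_mul, coeff_C_mul,
      coeff_X_pow, coeff_monomial]
    by_cases h : e = k
    · subst h; simp [mul_comm]
    · simp [h, Ne.symm h]

/-- **Degree bound for polynomial solutions** (Theorem `thm:deg`).
`σ(y)(t) = y(q·t)`, realised on polynomials by `p ↦ p.comp (C q * X)`; the equation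
`A_s σ^s(y) + ⋯ + A_0 y = t^{-ν} b` is stated in the equivalent, denominator-cleared form
`t^ν · (A_s σ^s(y) + ⋯ + A_0 y) = b`.  If the system is `t`-head regular (`ρ ≠ 0`) and
`y` is a nonzero polynomial solution of degree `n`, then either `b ≠ 0` and
`ℓ + n + ν ≤ deg b`, or `ρ(qⁿ) = 0`. -/
theorem degree_bound_polynomial_solutions
    (K : Type*) [Field K] [CharZero K]
    (q : K) (hq0 : q ≠ 0) (hqru : ∀ k : ℕ, 0 < k → q ^ k ≠ 1)
    (m s ν : ℕ)
    (A : ℕ → Matrix (Fin m) (Fin m) K[X]) (b : Fin m → K[X])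
    (ℓ : ℕ)
    (hℓ : ℓ = Finset.sup (Finset.range (s + 1)) fun j =>
      Finset.sup Finset.univ fun ik : Fin m × Fin m => (A j ik.1 ik.2).natDegree)
    (rho : K[X])
    (hrho : rho = Matrix.det (∑ j ∈ Finset.range (s + 1),
      (X : K[X]) ^ j • ((A j).map fun p => Polynomial.C (p.coeff ℓ))))
    (hreg : rho ≠ 0)
    (y : Fin m → K[X]) (hy : y ≠ 0)
    (n : ℕ) (hn : n = Finset.univ.sup fun i => (y i).natDegree)
    (hsol : (X : K[X]) ^ ν • (∑ j ∈ Finset.range (s + 1),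
        (A j).mulVec fun i => (y i).comp (Polynomial.C (q ^ j) * X)) = b) :
    (b ≠ 0 ∧ ℓ + n + ν ≤ Finset.univ.sup fun i => (b i).natDegree)
      ∨ rho.eval (q ^ n) = 0 := by
  classical
  set M : Matrix (Fin m) (Fin m) K :=
    fun i k => ∑ j ∈ Finset.range (s + 1), (q ^ n) ^ j * ((A j i k).coeff ℓ) with hM
  set v : Fin m → K := fun k => (y k).coeff n with hv
  -- Step A : rho.eval (q^n) = M.det
  have hdet : rho.eval (q ^ n) = M.det := by
    rw [hrho, ← coe_evalRingHom, RingHom.map_det]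
    congr 1
    ext i k
    simp only [Matrix.map_apply, Matrix.sum_apply, Matrix.smul_apply, smul_eq_mul, hM,
      RingHom.mapMatrix_apply, map_sum, eval_mul, eval_pow, eval_X, eval_C]
    refine Finset.sum_congr rfl fun j _ => ?_
    simp only [map_mul, map_pow, coe_evalRingHom, eval_X, eval_C]
  -- Step B : v ≠ 0
  have hvne : v ≠ 0 := by
    obtain ⟨i0, hi0⟩ := Function.ne_iff.mp hy
    have hne : (Finset.univ : Finset (Fin m)).Nonempty := ⟨i0, Finset.mem_univ i0⟩
    obtain ⟨i1, -, h1⟩ := Finset.exists_mem_eq_sup Finset.univ hne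
      (fun i => (y i).natDegree)
    by_cases h0 : y i1 = 0
    · have hn0 : n = 0 := by rw [hn, h1, h0, natDegree_zero]
      have hd : (y i0).natDegree = 0 :=
        le_antisymm (by rw [← hn0, hn]; exact Finset.le_sup (f := fun i => (y i).natDegree) (Finset.mem_univ i0))
          (Nat.zero_le _)
      have hvi : v i0 ≠ 0 := by
        show (y i0).coeff n ≠ 0
        rw [hn0, ← hd, coeff_natDegree]
        exact leadingCoeff_ne_zero.mpr hi0
      exact fun hvz => hvi (by rw [hvz]; rfl)
    · have hvi : v i1 ≠ 0 := by
        show (y i1).coeff n ≠ 0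
        rw [hn, h1, coeff_natDegree]
        exact leadingCoeff_ne_zero.mpr h0
      exact fun hvz => hvi (by rw [hvz]; rfl)
  -- Step C : key coefficient identity
  have key : ∀ i, (b i).coeff (ℓ + n + ν) = M.mulVec v i := by
    intro i
    have hb : b i = X ^ ν * (∑ j ∈ Finset.range (s + 1),
        (A j).mulVec fun i => (y i).comp (C (q ^ j) * X)) i := by
      rw [← hsol]; simp [Pi.smul_apply, smul_eq_mul]
    rw [hb, show ℓ + n + ν = (ℓ + n) + ν from rfl, coeff_X_pow_mul,
      Finset.sum_apply, finset_sum_coeff]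
    have hterm : ∀ j ∈ Finset.range (s + 1),
        (((A j).mulVec fun i => (y i).comp (C (q ^ j) * X)) i).coeff (ℓ + n)
          = ∑ k, ((A j i k).coeff ℓ) * ((q ^ n) ^ j * (y k).coeff n) := by
      intro j hj
      simp only [Matrix.mulVec, dotProduct]
      rw [finset_sum_coeff]
      refine Finset.sum_congr rfl fun k _ => ?_
      have hA : (A j i k).natDegree ≤ ℓ := by
        have h2 : (Finset.univ.sup fun ik : Fin m × Fin m => (A j ik.1 ik.2).natDegree) ≤ ℓ := by
          rw [hℓ]
          exact Finset.le_sup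
            (f := fun j => Finset.univ.sup fun ik : Fin m × Fin m => (A j ik.1 ik.2).natDegree) hj
        exact le_trans (Finset.le_sup
          (f := fun ik : Fin m × Fin m => (A j ik.1 ik.2).natDegree)
          (Finset.mem_univ ((i, k) : Fin m × Fin m))) h2
      have hyk : ((y k).comp (C (q ^ j) * X)).natDegree ≤ n := by
        have h1 : ((y k).comp (C (q ^ j) * X)).natDegree ≤ (y k).natDegree := by
          have h := natDegree_comp_le (p := y k) (q := C (q ^ j) * X)
          rwa [natDegree_C_mul_X _ (pow_ne_zero j hq0), mul_one] at h
        exact h1.trans (by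
          rw [hn]
          exact Finset.le_sup (f := fun i => (y i).natDegree) (Finset.mem_univ k))
      rw [coeff_mul_add_eq_of_natDegree_le hA hyk, coeff_comp_C_mul_X, ← pow_right_comm]
    rw [Finset.sum_congr rfl hterm, Finset.sum_comm]
    simp only [Matrix.mulVec, dotProduct, hM, hv, Finset.sum_mul]
    exact Finset.sum_congr rfl fun k _ => Finset.sum_congr rfl fun j _ => by ring
  -- Step D : conclude
  by_cases hval : rho.eval (q ^ n) = 0
  · exact Or.inr hval
  left
  have hMdet : M.det ≠ 0 := by rw [← hdet]; exact hval
  have hMunit : IsUnit M := (Matrix.isUnit_iff_isUnit_det M).mpr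
    (isUnit_iff_ne_zero.mpr hMdet)
  have hinj : Function.Injective M.mulVec :=
    Matrix.mulVec_injective_iff_isUnit.mpr hMunit
  have hMv : M.mulVec v ≠ 0 := fun h => hvne (hinj (by rw [h, Matrix.mulVec_zero]))
  obtain ⟨i, hi⟩ := Function.ne_iff.mp hMv
  have hbi : (b i).coeff (ℓ + n + ν) ≠ 0 := by rw [key i]; exact hi
  constructor
  · intro hb0; exact hbi (by rw [hb0]; simp)
  · exact le_trans (le_natDegree_of_ne_zero hbi) (Finset.le_sup (f := fun i => (b i).natDegree) (Finset.mem_univ i))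
end

section
/- Let A_0, …, A_s ∈ M_m(K[t]), b ∈ K[t]^m and ν ∈ ℕ. Suppose y ∈ K(t)^m solves A_s·σ^s(y) + … + A_0·y = t^{−ν}·b, and suppose y = u/g + v/t^n with u, v ∈ K[t]^m, g ∈ K[t] nonzero, t ∤ g, and n > ν. Then t divides every entry of the polynomial vector Σ_{j=0}^s q^{−n·j}·A_j·σ^j(v). -/
open Polynomial

lemma sigma_pow_X (K : Type*) [Field K] (q : K)
    (σ : RatFunc K ≃ₐ[K] RatFunc K) (hσ : σ RatFunc.X = RatFunc.C q * RatFunc.X) (j : ℕ) :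
    (σ ^ j) RatFunc.X = RatFunc.C (q ^ j) * RatFunc.X := by
  induction j with
  | zero => simp
  | succ j ih =>
    rw [pow_succ', AlgEquiv.mul_apply, ih, map_mul, hσ, ← RatFunc.algebraMap_eq_C,
      AlgEquiv.commutes]
    rw [RatFunc.algebraMap_eq_C, pow_succ, map_mul]
    ring

lemma sigma_pow_algebraMap (K : Type*) [Field K] (q : K)
    (σ : RatFunc K ≃ₐ[K] RatFunc K) (hσ : σ RatFunc.X = RatFunc.C q * RatFunc.X)
    (j : ℕ) (p : K[X]) :
    (σ ^ j) (algebraMap K[X] (RatFunc K) p)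
      = algebraMap K[X] (RatFunc K) (p.comp (C (q ^ j) * X)) := by
  have h1 : ∀ r : K[X], algebraMap K[X] (RatFunc K) r = Polynomial.aeval RatFunc.X r := by
    intro r
    rw [← RatFunc.algebraMap_X (K := K), Polynomial.aeval_algebraMap_apply]
    simp
  have h2 : (σ ^ j) ((aeval (RatFunc.X : RatFunc K)) p) = aeval ((σ ^ j) RatFunc.X) p :=
    (Polynomial.aeval_algHom_apply
      ((σ ^ j : RatFunc K ≃ₐ[K] RatFunc K) : RatFunc K →ₐ[K] RatFunc K) RatFunc.X p).symm
  rw [h1, h1, Polynomial.aeval_comp, h2]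
  simp [sigma_pow_X K q σ hσ j, RatFunc.algebraMap_eq_C]


/-- If `y = u/g + v/tⁿ` (with `t ∤ g`, `n > ν`) solves
`A_s σ^s(y) + ⋯ + A_0 y = t^{-ν} b`, then `t` divides every entry of the polynomial
vector `∑_{j=0}^s q^{-n·j}·A_j·σ^j(v)`.  Here `σ` is the `K`-algebra automorphism of
`K(t)` with `σ(t) = q·t`, and on polynomials `σ^j(v)(t) = v(q^j·t)` is realised by
`p ↦ p.comp (C (q^j) * X)`. -/
theorem t_dvd_trailing_combination
    (K : Type*) [Field K] [CharZero K]
    (q : K) (hq0 : q ≠ 0) (hqru : ∀ k : ℕ, 0 < k → q ^ k ≠ 1)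
    (σ : RatFunc K ≃ₐ[K] RatFunc K) (hσ : σ RatFunc.X = RatFunc.C q * RatFunc.X)
    (m s ν : ℕ)
    (A : ℕ → Matrix (Fin m) (Fin m) K[X]) (b : Fin m → K[X])
    (y : Fin m → RatFunc K)
    (hsol : ∑ j ∈ Finset.range (s + 1),
        ((A j).map (algebraMap K[X] (RatFunc K))).mulVec (fun i => (σ ^ j) (y i))
      = fun i => algebraMap K[X] (RatFunc K) (b i) / RatFunc.X ^ ν)
    (u v : Fin m → K[X]) (g : K[X]) (hg : g ≠ 0) (htg : ¬ (X : K[X]) ∣ g)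
    (n : ℕ) (hn : ν < n)
    (hy : y = fun i => algebraMap K[X] (RatFunc K) (u i) / algebraMap K[X] (RatFunc K) g
      + algebraMap K[X] (RatFunc K) (v i) / RatFunc.X ^ n) :
    ∀ i : Fin m, (X : K[X]) ∣
      (∑ j ∈ Finset.range (s + 1), (q ^ (n * j))⁻¹ •
        (A j).mulVec fun i' => (v i').comp (Polynomial.C (q ^ j) * X)) i := by
  intro i
  simp only [Finset.sum_apply, Pi.smul_apply, Matrix.mulVec, dotProduct]
  have hφinj : Function.Injective (algebraMap K[X] (RatFunc K)) :=
    RatFunc.algebraMap_injective K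
  have hXne : (RatFunc.X : RatFunc K) ≠ 0 := RatFunc.X_ne_zero
  have hg0 : g.eval 0 ≠ 0 := by
    intro h
    exact htg (Polynomial.X_dvd_iff.mpr (by rwa [Polynomial.coeff_zero_eq_eval_zero]))
  have hτg0 : ∀ j : ℕ, (g.comp (C (q ^ j) * X)).eval 0 = g.eval 0 := by
    intro j; simp [Polynomial.eval_comp]
  set G : K[X] := ∏ k ∈ Finset.range (s + 1), g.comp (C (q ^ k) * X) with hG
  have hGeval : G.eval 0 ≠ 0 := by
    rw [hG, Polynomial.eval_prod]
    exact Finset.prod_ne_zero_iff.mpr (fun k _ => by rw [hτg0]; exact hg0)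
  have hXG : ¬ (X : K[X]) ∣ G := by
    intro h
    exact hGeval (by rw [← Polynomial.coeff_zero_eq_eval_zero]; exact Polynomial.X_dvd_iff.mp h)
  have hτgne : ∀ j : ℕ, algebraMap K[X] (RatFunc K) (g.comp (C (q ^ j) * X)) ≠ 0 := by
    intro j h
    have h0 : g.comp (C (q ^ j) * X) = 0 := hφinj (by simpa using h)
    exact hg0 (by rw [← hτg0 j, h0, Polynomial.eval_zero])
  have hCne : ∀ j : ℕ, (RatFunc.C (q ^ (n * j)) : RatFunc K) ≠ 0 := by
    intro j h
    simp [hq0] at h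
  have hσy : ∀ j : ℕ, ∀ i' : Fin m, (σ ^ j) (y i')
      = algebraMap K[X] (RatFunc K) ((u i').comp (C (q ^ j) * X))
          / algebraMap K[X] (RatFunc K) (g.comp (C (q ^ j) * X))
        + algebraMap K[X] (RatFunc K) ((v i').comp (C (q ^ j) * X))
          / (algebraMap K[X] (RatFunc K) (C (q ^ (n * j)))
              * algebraMap K[X] (RatFunc K) (X ^ n)) := by
    intro j i'
    rw [hy]
    simp only
    rw [show (RatFunc.X : RatFunc K) ^ n = algebraMap K[X] (RatFunc K) (X ^ n) by
      rw [map_pow, RatFunc.algebraMap_X]]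
    rw [map_add, map_div₀, map_div₀,
      sigma_pow_algebraMap K q σ hσ j, sigma_pow_algebraMap K q σ hσ j,
      sigma_pow_algebraMap K q σ hσ j, sigma_pow_algebraMap K q σ hσ j]
    rw [show ((X : K[X]) ^ n).comp (C (q ^ j) * X) = C (q ^ (n * j)) * X ^ n by
      rw [Polynomial.X_pow_comp, mul_pow, ← Polynomial.C_pow, ← pow_mul, mul_comm j n]]
    rw [map_mul]
  have Esum : ∑ j ∈ Finset.range (s + 1), ∑ i' : Fin m,
      algebraMap K[X] (RatFunc K) (A j i i') * (σ ^ j) (y i')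
      = algebraMap K[X] (RatFunc K) (b i) / RatFunc.X ^ ν := by
    have hE := congrFun hsol i
    simpa only [Finset.sum_apply, Matrix.mulVec, dotProduct,
      Matrix.map_apply] using hE
  have hCne : ∀ j : ℕ, algebraMap K[X] (RatFunc K) (C (q ^ (n * j))) ≠ 0 := by
    intro j h
    have h0 : (C (q ^ (n * j)) : K[X]) = 0 := hφinj (by simpa using h)
    rw [Polynomial.C_eq_zero] at h0
    exact pow_ne_zero _ hq0 h0
  have hXnne : algebraMap K[X] (RatFunc K) ((X : K[X]) ^ n) ≠ 0 := by
    intro h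
    have h0 : (X : K[X]) ^ n = 0 := hφinj (by simpa using h)
    exact pow_ne_zero _ Polynomial.X_ne_zero h0
  have hterm : ∀ j ∈ Finset.range (s + 1), ∀ i' : Fin m,
      algebraMap K[X] (RatFunc K) G * algebraMap K[X] (RatFunc K) ((X : K[X]) ^ n)
          * (algebraMap K[X] (RatFunc K) (A j i i') * (σ ^ j) (y i'))
        = algebraMap K[X] (RatFunc K) ((X : K[X]) ^ n)
            * algebraMap K[X] (RatFunc K) (A j i i' * (u i').comp (C (q ^ j) * X)
              * ∏ k ∈ (Finset.range (s + 1)).erase j, g.comp (C (q ^ k) * X))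
          + algebraMap K[X] (RatFunc K) (C ((q ^ (n * j))⁻¹))
            * algebraMap K[X] (RatFunc K) (G * (A j i i' * (v i').comp (C (q ^ j) * X))) := by
    intro j hj i'
    have hsplit : G = g.comp (C (q ^ j) * X)
        * ∏ k ∈ (Finset.range (s + 1)).erase j, g.comp (C (q ^ k) * X) :=
      (Finset.mul_prod_erase _ _ hj).symm
    have hinv : algebraMap K[X] (RatFunc K) (C ((q ^ (n * j))⁻¹))
        = (algebraMap K[X] (RatFunc K) (C (q ^ (n * j))))⁻¹ := by
      rw [RatFunc.algebraMap_C, RatFunc.algebraMap_C, map_inv₀]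
    rw [hσy j i', hinv,
      map_mul (algebraMap K[X] (RatFunc K)) G,
      map_mul (algebraMap K[X] (RatFunc K)) (A j i i' * (u i').comp (C (q ^ j) * X)),
      map_mul (algebraMap K[X] (RatFunc K)) (A j i i'),
      map_mul (algebraMap K[X] (RatFunc K)) (A j i i')]
    rw [show algebraMap K[X] (RatFunc K) G
        = algebraMap K[X] (RatFunc K) (g.comp (C (q ^ j) * X))
          * algebraMap K[X] (RatFunc K)
            (∏ k ∈ (Finset.range (s + 1)).erase j, g.comp (C (q ^ k) * X)) by
      rw [← map_mul, ← hsplit]]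
    have hCq : (RatFunc.C q : RatFunc K) ≠ 0 := by
      intro h
      exact hq0 (by simpa using h)
    have h1 : algebraMap K[X] (RatFunc K) (g.comp (C q ^ j * X)) ≠ 0 := by
      have := hτgne j; rwa [Polynomial.C_pow] at this
    have h2 : (RatFunc.C q : RatFunc K) ^ (n * j) ≠ 0 := pow_ne_zero _ hCq
    field_simp [h1, h2]
  set W : K[X] := ∑ j ∈ Finset.range (s + 1), (q ^ (n * j))⁻¹ •
      ∑ i' : Fin m, A j i i' * (v i').comp (C (q ^ j) * X) with hW
  set R : K[X] := ∑ j ∈ Finset.range (s + 1), ∑ i' : Fin m,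
      A j i i' * (u i').comp (C (q ^ j) * X)
      * ∏ k ∈ (Finset.range (s + 1)).erase j, g.comp (C (q ^ k) * X) with hR
  have e1 : algebraMap K[X] (RatFunc K) (X ^ n * R)
      = ∑ j ∈ Finset.range (s + 1), ∑ i' : Fin m,
        algebraMap K[X] (RatFunc K) ((X : K[X]) ^ n)
          * algebraMap K[X] (RatFunc K) (A j i i' * (u i').comp (C (q ^ j) * X)
            * ∏ k ∈ (Finset.range (s + 1)).erase j, g.comp (C (q ^ k) * X)) := by
    rw [hR, map_mul, map_sum, Finset.mul_sum]
    refine Finset.sum_congr rfl fun j _ => ?_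
    rw [map_sum, Finset.mul_sum]
  have e2 : algebraMap K[X] (RatFunc K) (G * W)
      = ∑ j ∈ Finset.range (s + 1), ∑ i' : Fin m,
        algebraMap K[X] (RatFunc K) (C ((q ^ (n * j))⁻¹))
          * algebraMap K[X] (RatFunc K) (G * (A j i i' * (v i').comp (C (q ^ j) * X))) := by
    rw [map_mul, hW, map_sum, Finset.mul_sum]
    refine Finset.sum_congr rfl fun j _ => ?_
    rw [Polynomial.smul_eq_C_mul, map_mul, map_sum, Finset.mul_sum, Finset.mul_sum]
    refine Finset.sum_congr rfl fun i' _ => ?_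
    simp only [map_mul]
    ring
  have hkey : G * W + X ^ n * R = X ^ (n - ν) * (G * b i) := by
    apply hφinj
    calc algebraMap K[X] (RatFunc K) (G * W + X ^ n * R)
        = ∑ j ∈ Finset.range (s + 1), ∑ i' : Fin m,
            (algebraMap K[X] (RatFunc K) ((X : K[X]) ^ n)
                * algebraMap K[X] (RatFunc K) (A j i i' * (u i').comp (C (q ^ j) * X)
                  * ∏ k ∈ (Finset.range (s + 1)).erase j, g.comp (C (q ^ k) * X))
              + algebraMap K[X] (RatFunc K) (C ((q ^ (n * j))⁻¹))
                * algebraMap K[X] (RatFunc K)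
                    (G * (A j i i' * (v i').comp (C (q ^ j) * X)))) := by
          rw [map_add, e1, e2]
          rw [← Finset.sum_add_distrib]
          refine Finset.sum_congr rfl fun j _ => ?_
          rw [← Finset.sum_add_distrib]
          refine Finset.sum_congr rfl fun i' _ => ?_
          ring
      _ = ∑ j ∈ Finset.range (s + 1), ∑ i' : Fin m,
            algebraMap K[X] (RatFunc K) G * algebraMap K[X] (RatFunc K) ((X : K[X]) ^ n)
              * (algebraMap K[X] (RatFunc K) (A j i i') * (σ ^ j) (y i')) :=
          Finset.sum_congr rfl fun j hj =>
            Finset.sum_congr rfl fun i' _ => (hterm j hj i').symm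
      _ = algebraMap K[X] (RatFunc K) G * algebraMap K[X] (RatFunc K) ((X : K[X]) ^ n)
            * (algebraMap K[X] (RatFunc K) (b i) / RatFunc.X ^ ν) := by
          rw [← Esum]
          simp only [Finset.mul_sum]
      _ = algebraMap K[X] (RatFunc K) (X ^ (n - ν) * (G * b i)) := by
          rw [show algebraMap K[X] (RatFunc K) ((X : K[X]) ^ n)
              = (RatFunc.X : RatFunc K) ^ n by rw [map_pow, RatFunc.algebraMap_X]]
          rw [map_mul, map_mul]
          rw [show algebraMap K[X] (RatFunc K) ((X : K[X]) ^ (n - ν))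
              = (RatFunc.X : RatFunc K) ^ (n - ν) by rw [map_pow, RatFunc.algebraMap_X]]
          rw [show (RatFunc.X : RatFunc K) ^ n
              = RatFunc.X ^ (n - ν) * RatFunc.X ^ ν by
            rw [← pow_add, Nat.sub_add_cancel hn.le]]
          field_simp
  have hdvd1 : (X : K[X]) ∣ X ^ (n - ν) * (G * b i) :=
    dvd_mul_of_dvd_left (dvd_pow_self X (Nat.sub_ne_zero_of_lt hn)) _
  have hdvd2 : (X : K[X]) ∣ X ^ n * R :=
    dvd_mul_of_dvd_left (dvd_pow_self X (by omega)) _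
  have hdvd : (X : K[X]) ∣ G * W := by
    have hGW : G * W = X ^ (n - ν) * (G * b i) - X ^ n * R := by
      rw [← hkey]; ring
    rw [hGW]
    exact dvd_sub hdvd1 hdvd2
  exact ((Polynomial.prime_X.2.2 _ _ hdvd).resolve_left hXG)
end
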